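/- The presented group on four generators x₁, x₂, x₃, x₄ with defining relations x₄x₃x₂x₁ = e, x₃ = x₄, (x₂x₄)² = (x₄x₂)², x₁ = x₄x₂x₄⁻¹, x₁ = x₃x₂x₃⁻¹, (x₂x₃)² = (x₃x₂)² is isomorphic to the presented group ⟨a, b | (ab)² = (ba)² = e⟩. -/

import Mathlib

namespace Stmt1

/-- Generators `x₁, x₂, x₃, x₄` of the free group, indexed by `0, 1, 2, 3`. -/
def x (i : Fin 4) : FreeGroup (Fin 4) := FreeGroup.of i

/-- The relators corresponding to the defining relations
`x₄x₃x₂x₁ = e`, `x₃ = x₄`, `(x₂x₄)² = (x₄x₂)²`, `x₁ = x₄x₂x₄⁻¹`,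
`x₁ = x₃x₂x₃⁻¹`, `(x₂x₃)² = (x₃x₂)²`. -/
def rels : Set (FreeGroup (Fin 4)) :=
  { x 3 * x 2 * x 1 * x 0,
    x 2 * (x 3)⁻¹,
    (x 1 * x 3) ^ 2 * ((x 3 * x 1) ^ 2)⁻¹,
    x 0 * (x 3 * x 1 * (x 3)⁻¹)⁻¹,
    x 0 * (x 2 * x 1 * (x 2)⁻¹)⁻¹,
    (x 1 * x 2) ^ 2 * ((x 2 * x 1) ^ 2)⁻¹ }

/-- The relators `(ab)²` and `(ba)²` of the presentation `⟨a, b | (ab)² = (ba)² = e⟩`. -/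
def rels' : Set (FreeGroup (Fin 2)) :=
  {(FreeGroup.of 0 * FreeGroup.of 1) ^ 2, (FreeGroup.of 1 * FreeGroup.of 0) ^ 2}

lemma rel_one {α : Type*} {rels : Set (FreeGroup α)} {r : FreeGroup α} (h : r ∈ rels) :
    PresentedGroup.mk rels r = 1 := by
  exact (QuotientGroup.eq_one_iff r).2 (Subgroup.subset_normalClosure h)

noncomputable abbrev A : PresentedGroup rels' := PresentedGroup.of 0
noncomputable abbrev B : PresentedGroup rels' := PresentedGroup.of 1

lemma hAB : (A * B) ^ 2 = 1 := by
  have := rel_one (rels := rels') (Or.inl rfl)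
  simpa [PresentedGroup.of] using this

lemma hBA : (B * A) ^ 2 = 1 := by
  have := rel_one (rels := rels') (Or.inr rfl)
  simpa [PresentedGroup.of] using this

noncomputable abbrev X (i : Fin 4) : PresentedGroup rels := PresentedGroup.of i

lemma hX2 : X 2 = X 3 := by
  have := rel_one (rels := rels) (show x 2 * (x 3)⁻¹ ∈ rels by right; left; rfl)
  have h : X 2 * (X 3)⁻¹ = 1 := by simpa [x, X, PresentedGroup.of] using this
  group at h ⊢
  exact mul_inv_eq_one.mp h

lemma hX0 : X 0 = X 3 * X 1 * (X 3)⁻¹ := by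
  have := rel_one (rels := rels) (show x 0 * (x 3 * x 1 * (x 3)⁻¹)⁻¹ ∈ rels by
    right; right; right; left; rfl)
  have h : X 0 * (X 3 * X 1 * (X 3)⁻¹)⁻¹ = 1 := by simpa [x, X, PresentedGroup.of] using this
  exact mul_inv_eq_one.mp h

lemma hrel1 : X 3 * X 2 * X 1 * X 0 = 1 := by
  have := rel_one (rels := rels) (show x 3 * x 2 * x 1 * x 0 ∈ rels by left; rfl)
  simpa [x, X, PresentedGroup.of] using this

lemma hrel3 : (X 1 * X 3) ^ 2 = (X 3 * X 1) ^ 2 := by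
  have := rel_one (rels := rels) (show (x 1 * x 3) ^ 2 * ((x 3 * x 1) ^ 2)⁻¹ ∈ rels by
    right; right; left; rfl)
  have h : (X 1 * X 3) ^ 2 * ((X 3 * X 1) ^ 2)⁻¹ = 1 := by simpa [x, X, PresentedGroup.of] using this
  exact mul_inv_eq_one.mp h

lemma hX31 : (X 3 * X 1) ^ 2 = 1 := by
  have h1 := hrel1
  rw [hX2, hX0] at h1
  -- X3 * X3 * X1 * (X3 * X1 * X3⁻¹) = 1
  have h2 : X 3 * ((X 3 * X 1) ^ 2) * (X 3)⁻¹ = 1 := by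
    rw [pow_two]; simpa [mul_assoc] using h1
  have := congrArg (fun y => (X 3)⁻¹ * y * X 3) h2
  simpa [mul_assoc] using this

lemma hX13 : (X 1 * X 3) ^ 2 = 1 := hrel3.trans hX31

noncomputable def fwd : PresentedGroup rels →* PresentedGroup rels' := by
  apply PresentedGroup.toGroup (f := ![A * B * A⁻¹, B, A, A])
  have h1 := hAB
  have h2 := hBA
  rintro r (rfl | rfl | rfl | rfl | rfl | rfl) <;>
      simp only [x, map_mul, map_inv, map_pow, FreeGroup.lift_apply_of, Matrix.cons_val_zero,
        Matrix.cons_val_one, Matrix.head_cons, Matrix.cons_val_two, Matrix.tail_cons,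
        Matrix.cons_val_three, Matrix.head_fin_const, Matrix.cons_val_fin_one]
  · rw [show A * A * B * (A * B * A⁻¹) = A * (A * B) ^ 2 * A⁻¹ by rw [pow_two]; simp [mul_assoc],
      h1]; group
  · group
  · rw [show (B * A) ^ 2 * ((A * B) ^ 2)⁻¹ = (B * A) ^ 2 * ((A * B) ^ 2)⁻¹ by rfl, h1, h2]
    group
  · group
  · group
  · rw [show (B * A) ^ 2 * ((A * B) ^ 2)⁻¹ = (B * A) ^ 2 * ((A * B) ^ 2)⁻¹ by rfl, h1, h2]
    group

noncomputable def bwd : PresentedGroup rels' →* PresentedGroup rels := by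
  apply PresentedGroup.toGroup (f := ![X 3, X 1])
  rintro r (rfl | rfl) <;>
      simp only [map_mul, map_pow, FreeGroup.lift_apply_of, Matrix.cons_val_zero,
        Matrix.cons_val_one, Matrix.head_cons]
  · exact hX31
  · exact hX13

theorem presentation_iso :
    Nonempty (PresentedGroup rels ≃* PresentedGroup rels') := by
  refine ⟨MonoidHom.toMulEquiv fwd bwd ?_ ?_⟩
  · ext i
    fin_cases i <;>
        simp [fwd, bwd, PresentedGroup.toGroup.of]
    · exact hX0.symm
    · exact hX2.symm
  · ext i
    fin_cases i <;>
        simp [fwd, bwd, PresentedGroup.toGroup.of]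

end Stmt1
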